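/- Let G be a group, H a subgroup of G, and σ_qs : G → G a group automorphism with σ_qs ∘ σ_qs = id and σ_qs(H) = H. Assume N_G(H)/H is abelian, i.e. a·b·a⁻¹·b⁻¹ ∈ H for all a, b ∈ N_G(H). Let c ∈ G with c·σ_qs(c) ∈ Z(G), set σ = inn_c ∘ σ_qs, and assume there exists n ∈ N_G(H) with c·σ_qs(c)·σ_qs(n)·n ∈ H (equivalently, a σ-equivariant real structure on G/H exists). Then there is a bijection between: (a) the set of σ-equivariant real structures on G/H modulo equivalence (μ ∼ μ' iff μ' = ψ ∘ μ ∘ ψ⁻¹ for some G-equivariant bijection ψ of G/H), and (b) the cohomology group H¹(Γ, N_G(H)/H) = {aH ∈ N_G(H)/H | σ_qs(a)·a ∈ H} / {b⁻¹·σ_qs(b)·H | b ∈ N_G(H)} for the action of Γ on N_G(H)/H induced by σ_qs. -/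

import Mathlib

/-- A `σ`-equivariant real structure on the homogeneous space `G/H`: a map
`μ : G/H → G/H` with `μ ∘ μ = id` and `μ(g·x) = σ(g)·μ(x)`. -/
def IsEquivRealStructure {G : Type*} [Group G] (σ : G →* G) (H : Subgroup G)
    (μ : G ⧸ H → G ⧸ H) : Prop :=
  (∀ x, μ (μ x) = x) ∧ ∀ (g : G) (x : G ⧸ H), μ (g • x) = σ g • μ x

/-- Equivalence of `σ`-equivariant real structures on `G/H`: `μ ∼ μ'` iff
`μ' = ψ ∘ μ ∘ ψ⁻¹` for some `G`-equivariant bijection `ψ` of `G/H`. -/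
def realStructureRel {G : Type*} [Group G] (σ : G →* G) (H : Subgroup G)
    (μ μ' : {μ : G ⧸ H → G ⧸ H // IsEquivRealStructure σ H μ}) : Prop :=
  ∃ ψ : Equiv.Perm (G ⧸ H), (∀ (g : G) (x : G ⧸ H), ψ (g • x) = g • ψ x) ∧
    ∀ x : G ⧸ H, μ'.1 x = ψ (μ.1 (ψ.symm x))

/-- Representatives of `H¹(Γ, N_G(H)/H)`: elements `a ∈ N_G(H)` whose class `aH` is a
1-cocycle, i.e. `σ_qs(a)·a ∈ H`. -/
def H1Reps {G : Type*} [Group G] (σqs : G →* G) (H : Subgroup G) :=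
  {a : G // a ∈ Subgroup.normalizer (H : Set G) ∧ σqs a * a ∈ H}

/-- `a ∼ a'` iff `a'H = a·(b⁻¹·σ_qs(b))·H` for some `b ∈ N_G(H)`, i.e. the classes of
`a` and `a'` in `N_G(H)/H` differ by a coboundary `b⁻¹·σ_qs(b)·H`. -/
def H1Rel {G : Type*} [Group G] (σqs : G →* G) (H : Subgroup G)
    (a a' : H1Reps σqs H) : Prop :=
  ∃ b ∈ Subgroup.normalizer (H : Set G), (σqs b)⁻¹ * b * (a.1)⁻¹ * a'.1 ∈ H

set_option maxHeartbeats 2000000 in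
/-- **Proposition 3.17 (abstract core).** Let `σ_qs` be an involutive automorphism of
`G` with `σ_qs(H) = H`, suppose `N_G(H)/H` is abelian, let `c ∈ G` with
`c·σ_qs(c) ∈ Z(G)`, set `σ = inn_c ∘ σ_qs`, and assume a `σ`-equivariant real
structure on `G/H` exists (equivalently, `c·σ_qs(c)·σ_qs(n)·n ∈ H` for some
`n ∈ N_G(H)`). Then the set of `σ`-equivariant real structures on `G/H` modulo
equivalence is in bijection with `H¹(Γ, N_G(H)/H)` for the `Γ`-action induced by
`σ_qs`. -/
theorem equivRealStructures_biject_H1_of_normalizerQuotient {G : Type*} [Group G]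
    (H : Subgroup G) (σqs : G →* G) (hσ : ∀ g, σqs (σqs g) = g) (hH : H.map σqs = H)
    (hab : ∀ a ∈ Subgroup.normalizer (H : Set G), ∀ b ∈ Subgroup.normalizer (H : Set G), a * b * a⁻¹ * b⁻¹ ∈ H)
    (c : G) (hc : c * σqs c ∈ Subgroup.center G)
    (hex : ∃ n ∈ Subgroup.normalizer (H : Set G), c * σqs c * σqs n * n ∈ H) :
    Nonempty
      (Quot (realStructureRel ((MulAut.conj c).toMonoidHom.comp σqs) H) ≃
        Quot (H1Rel σqs H)) := by
  classical
  obtain ⟨n₀, hn₀N, hn₀H⟩ := hex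
  set N := Subgroup.normalizer (H : Set G) with hNdef
  set σ' := (MulAut.conj c).toMonoidHom.comp σqs with hσ'def
  have hσ'app : ∀ g : G, σ' g = c * σqs g * c⁻¹ := fun g => rfl
  -- basic facts about σqs
  have hinj : Function.Injective σqs := fun x y h => by
    have h2 := congrArg σqs h; rwa [hσ, hσ] at h2
  have hHmem : ∀ {h : G}, h ∈ H → σqs h ∈ H := by
    intro h hh; rw [← hH]; exact ⟨h, hh, rfl⟩
  have hHmem' : ∀ {h : G}, σqs h ∈ H → h ∈ H := by
    intro h hh
    rw [← hH] at hh; obtain ⟨x, hx, he⟩ := hh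
    rwa [← hinj he]
  have hconj : ∀ {x h : G}, x ∈ N → h ∈ H → x * h * x⁻¹ ∈ H := fun {x h} hx hh =>
    (Subgroup.mem_normalizer_iff.mp hx h).mp hh
  have hconj' : ∀ {x h : G}, x ∈ N → h ∈ H → x⁻¹ * h * x ∈ H := by
    intro x h hx hh
    have h2 := hconj (N.inv_mem hx) hh
    rwa [inv_inv] at h2
  have hNmem : ∀ {x : G}, x ∈ N → σqs x ∈ N := by
    intro x hx
    rw [hNdef, Subgroup.mem_normalizer_iff]
    intro h
    constructor
    · intro hh
      have h2 : x * σqs h * x⁻¹ ∈ H := hconj hx (hHmem hh)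
      have h3 := hHmem h2
      rw [map_mul, map_mul, map_inv, hσ] at h3
      exact h3
    · intro hh
      have h3 := hHmem hh
      rw [map_mul, map_mul, map_inv, hσ] at h3
      exact hHmem' ((Subgroup.mem_normalizer_iff.mp hx (σqs h)).mpr h3)
  have hzc : ∀ g : G, g * (c * σqs c) = (c * σqs c) * g := Subgroup.mem_center_iff.mp hc
  have hzN : c * σqs c ∈ N := Subgroup.center_le_normalizer (H : Set G) hc
  have hzconj : ∀ x : G, (c * σqs c) * x * (c * σqs c)⁻¹ = x := by
    intro x; rw [← hzc x]; group
  have hswap : ∀ p u v w : G, p ∈ N → u ∈ N → v ∈ N → p*v*u*w ∈ H → p*u*v*w ∈ H := by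
    intro p u v w hp hu hv hmem
    have h1 : p*(u*v*u⁻¹*v⁻¹)*p⁻¹ ∈ H := hconj hp (hab u hu v hv)
    have h2 := H.mul_mem h1 hmem
    have e : p*u*v*w = (p*(u*v*u⁻¹*v⁻¹)*p⁻¹) * (p*v*u*w) := by group
    rw [e]; exact h2
  -- the μ attached to a basepoint m
  have FmuOK : ∀ (m : G), (∀ h ∈ H, m⁻¹ * (c * σqs h * c⁻¹) * m ∈ H) →
      ∀ (x y : G), (QuotientGroup.leftRel H).r x y →
        ((c * σqs x * c⁻¹ * m : G) : G ⧸ H) = ((c * σqs y * c⁻¹ * m : G) : G ⧸ H) := by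
    intro m hm x y hxy
    rw [QuotientGroup.leftRel_apply] at hxy
    apply Quotient.sound'
    rw [QuotientGroup.leftRel_apply]
    have h2 := hm _ hxy
    rw [map_mul, map_inv] at h2
    have e : (c * σqs x * c⁻¹ * m)⁻¹ * (c * σqs y * c⁻¹ * m)
        = m⁻¹ * (c * ((σqs x)⁻¹ * σqs y) * c⁻¹) * m := by group
    rw [e]; exact h2
  set mkMu : ∀ (m : G), (∀ h ∈ H, m⁻¹ * (c * σqs h * c⁻¹) * m ∈ H) → (G ⧸ H → G ⧸ H) :=
    fun m hm x => Quotient.liftOn' x (fun g => ((c * σqs g * c⁻¹ * m : G) : G ⧸ H))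
      (FmuOK m hm) with hmkMu
  have mkMu_mk : ∀ m hm (g : G), mkMu m hm ((g : G) : G ⧸ H) = ((c * σqs g * c⁻¹ * m : G) : G ⧸ H) :=
    fun _ _ _ => rfl
  -- well-definedness for basepoint c*a*n₀ with a ∈ N
  have hwdN : ∀ (a : G), a ∈ N → ∀ h ∈ H, (c*a*n₀)⁻¹ * (c * σqs h * c⁻¹) * (c*a*n₀) ∈ H := by
    intro a ha h hh
    have h1 : (a*n₀)⁻¹ * σqs h * (a*n₀) ∈ H := hconj' (N.mul_mem ha hn₀N) (hHmem hh)
    have e : (c*a*n₀)⁻¹ * (c * σqs h * c⁻¹) * (c*a*n₀) = (a*n₀)⁻¹ * σqs h * (a*n₀) := by group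
    rw [e]; exact h1
  -- involutivity core
  have hinvK : ∀ (a : G), a ∈ N → σqs a * a ∈ H →
      (c * σqs (c*a*n₀) * c⁻¹) * (c*a*n₀) ∈ H := by
    intro a haN haC
    have k12 : (σqs a * a) * (c * σqs c * σqs n₀ * n₀) ∈ H := H.mul_mem haC hn₀H
    have e1 : (σqs a * a) * (c * σqs c * σqs n₀ * n₀)
        = (σqs a * a * (c * σqs c)) * (σqs n₀ * n₀) := by group
    rw [e1, hzc (σqs a * a)] at k12
    have k13 : (c * σqs c * σqs a) * σqs n₀ * a * n₀ ∈ H := by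
      refine hswap _ _ _ _ (N.mul_mem hzN (hNmem haN)) (hNmem hn₀N) haN ?_
      have e2 : (c * σqs c * σqs a) * a * σqs n₀ * n₀
          = c * σqs c * (σqs a * a) * (σqs n₀ * n₀) := by group
      rw [e2]; exact k12
    have e3 : (c * σqs (c*a*n₀) * c⁻¹) * (c*a*n₀) = (c * σqs c * σqs a) * σqs n₀ * a * n₀ := by
      simp only [map_mul]; group
    rw [e3]; exact k13
  -- the forward construction
  set F : H1Reps σqs H → {μ : G ⧸ H → G ⧸ H // IsEquivRealStructure σ' H μ} := fun a =>
    ⟨mkMu (c*a.1*n₀) (hwdN a.1 a.2.1), by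
      constructor
      · intro x
        refine QuotientGroup.induction_on x ?_
        intro g
        rw [mkMu_mk _ (hwdN a.1 a.2.1), mkMu_mk _ (hwdN a.1 a.2.1), QuotientGroup.eq]
        have hK := hinvK a.1 a.2.1 a.2.2
        have e : (c * σqs (c * σqs g * c⁻¹ * (c*a.1*n₀)) * c⁻¹ * (c*a.1*n₀))⁻¹ * g
            = ((c * σqs (c*a.1*n₀) * c⁻¹) * (c*a.1*n₀))⁻¹ := by
          simp only [map_mul, map_inv, hσ]
          trans (n₀⁻¹ * a.1⁻¹ * (σqs n₀)⁻¹ * (σqs a.1)⁻¹ * ((c * σqs c) * g)⁻¹ * g)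
          · group
          · rw [← hzc g]; group
        rw [e]; exact H.inv_mem hK
      · intro g x
        refine QuotientGroup.induction_on x ?_
        intro u
        have e1 : mkMu (c*a.1*n₀) (hwdN a.1 a.2.1) (g • ((u : G) : G ⧸ H))
            = ((c * σqs (g*u) * c⁻¹ * (c*a.1*n₀) : G) : G ⧸ H) := mkMu_mk _ (hwdN a.1 a.2.1) (g*u)
        rw [e1, mkMu_mk _ (hwdN a.1 a.2.1)]
        show _ = ((c * σqs g * c⁻¹ * (c * σqs u * c⁻¹ * (c*a.1*n₀)) : G) : G ⧸ H)
        exact congrArg _ (by rw [map_mul]; group)⟩ with hFdef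
  have Fmk : ∀ (a : H1Reps σqs H) (g : G),
      (F a).1 ((g : G) : G ⧸ H) = ((c * σqs g * c⁻¹ * (c*a.1*n₀) : G) : G ⧸ H) :=
    fun a g => rfl
  -- the backward construction
  have Gprop : ∀ (μ : {μ : G ⧸ H → G ⧸ H // IsEquivRealStructure σ' H μ}),
      c⁻¹ * (μ.1 ((1:G) : G ⧸ H)).out * n₀⁻¹ ∈ N ∧
      σqs (c⁻¹ * (μ.1 ((1:G) : G ⧸ H)).out * n₀⁻¹) * (c⁻¹ * (μ.1 ((1:G) : G ⧸ H)).out * n₀⁻¹) ∈ H := by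
    intro μ
    set m := (μ.1 ((1:G) : G ⧸ H)).out with hm
    have hm1 : ((m : G) : G ⧸ H) = μ.1 ((1:G) : G ⧸ H) := Quotient.out_eq' _
    have key : ∀ h : G, h ∈ H → ((c * σqs h * c⁻¹ * m : G) : G ⧸ H) = ((m : G) : G ⧸ H) := by
      intro h hh
      have e0 : ((h : G) : G ⧸ H) = ((1:G) : G ⧸ H) := by
        rw [QuotientGroup.eq]; simpa using H.inv_mem hh
      calc ((c * σqs h * c⁻¹ * m : G) : G ⧸ H) = σ' h • ((m:G) : G ⧸ H) := rfl
        _ = σ' h • μ.1 ((1:G) : G ⧸ H) := by rw [hm1]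
        _ = μ.1 (h • ((1:G) : G ⧸ H)) := (μ.2.2 h _).symm
        _ = μ.1 ((h:G) : G ⧸ H) := congrArg μ.1 (congrArg _ (mul_one h))
        _ = μ.1 ((1:G) : G ⧸ H) := by rw [e0]
        _ = ((m : G) : G ⧸ H) := hm1.symm
    have P1 : ∀ h ∈ H, (c⁻¹*m)⁻¹ * h * (c⁻¹*m) ∈ H := by
      intro h hh
      have h1 := key (σqs h⁻¹) (hHmem (H.inv_mem hh))
      rw [QuotientGroup.eq, hσ] at h1
      have e : (c⁻¹*m)⁻¹ * h * (c⁻¹*m) = (c * h⁻¹ * c⁻¹ * m)⁻¹ * m := by group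
      rw [e]; exact h1
    have P2 : (c * σqs c) * ((σqs c)⁻¹ * σqs m) * (c⁻¹*m) ∈ H := by
      have h1 : μ.1 ((m : G) : G ⧸ H) = ((1:G) : G ⧸ H) := by
        rw [hm1]; exact μ.2.1 _
      have h2 : μ.1 ((m : G) : G ⧸ H) = ((c * σqs m * c⁻¹ * m : G) : G ⧸ H) := by
        calc μ.1 ((m:G) : G ⧸ H)
            = μ.1 (m • ((1:G) : G ⧸ H)) := congrArg μ.1 (congrArg _ (mul_one m)).symm
          _ = σ' m • μ.1 ((1:G) : G ⧸ H) := μ.2.2 m _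
          _ = σ' m • ((m:G) : G ⧸ H) := by rw [hm1]
      have h3 : ((c * σqs m * c⁻¹ * m : G) : G ⧸ H) = ((1:G) : G ⧸ H) := h2.symm.trans h1
      rw [QuotientGroup.eq] at h3
      have h4 := H.inv_mem h3
      have e : (c * σqs c) * ((σqs c)⁻¹ * σqs m) * (c⁻¹*m) = ((c * σqs m * c⁻¹ * m)⁻¹ * 1)⁻¹ := by
        group
      rw [e]; exact h4
    have P1σ : ∀ h ∈ H, ((σqs c)⁻¹ * σqs m)⁻¹ * h * ((σqs c)⁻¹ * σqs m) ∈ H := by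
      intro h hh
      have h1 := hHmem (P1 (σqs h) (hHmem hh))
      simp only [map_mul, map_inv, hσ] at h1
      exact h1
    have apreN : c⁻¹ * m ∈ N := by
      rw [hNdef, Subgroup.mem_normalizer_iff]
      intro g
      constructor
      · intro hg
        have h1 : ((c*σqs c) * ((σqs c)⁻¹ * σqs m) * (c⁻¹*m)) * g
            * ((c*σqs c) * ((σqs c)⁻¹ * σqs m) * (c⁻¹*m))⁻¹ ∈ H :=
          H.mul_mem (H.mul_mem P2 hg) (H.inv_mem P2)
        have h2 := P1σ _ h1
        have e : (c⁻¹*m) * g * (c⁻¹*m)⁻¹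
            = ((σqs c)⁻¹ * σqs m)⁻¹ * (((c*σqs c) * ((σqs c)⁻¹ * σqs m) * (c⁻¹*m)) * g
              * ((c*σqs c) * ((σqs c)⁻¹ * σqs m) * (c⁻¹*m))⁻¹) * ((σqs c)⁻¹ * σqs m) := by
          trans ((σqs c)⁻¹ * σqs m)⁻¹ * ((c*σqs c) * (((σqs c)⁻¹ * σqs m)
            * ((c⁻¹*m) * g * (c⁻¹*m)⁻¹) * ((σqs c)⁻¹ * σqs m)⁻¹) * (c*σqs c)⁻¹) * ((σqs c)⁻¹ * σqs m)
          · rw [hzconj]; group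
          · group
        rw [e]; exact h2
      · intro hg
        have h1 := P1 _ hg
        have e : g = (c⁻¹*m)⁻¹ * ((c⁻¹*m) * g * (c⁻¹*m)⁻¹) * (c⁻¹*m) := by group
        rw [e]; exact h1
    have βN : (σqs c)⁻¹ * σqs m ∈ N := by
      have h1 := hNmem apreN
      rwa [map_mul, map_inv] at h1
    refine ⟨N.mul_mem apreN (N.inv_mem hn₀N), ?_⟩
    -- cocycle condition
    have hY0 := H.mul_mem P2 (H.inv_mem hn₀H)
    have eY : ((c*σqs c) * ((σqs c)⁻¹ * σqs m) * (c⁻¹*m)) * (c * σqs c * σqs n₀ * n₀)⁻¹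
        = (c * σqs c) * (((σqs c)⁻¹ * σqs m) * (c⁻¹*m) * n₀⁻¹ * (σqs n₀)⁻¹) * (c * σqs c)⁻¹ := by
      group
    rw [eY, hzconj] at hY0
    -- hY0 : ((σqs c)⁻¹ * σqs m) * (c⁻¹*m) * n₀⁻¹ * (σqs n₀)⁻¹ ∈ H
    have X2 : ((σqs c)⁻¹ * σqs m) * (c⁻¹*m) * (σqs n₀)⁻¹ * n₀⁻¹ ∈ H := by
      have h' := hswap (((σqs c)⁻¹ * σqs m) * (c⁻¹*m)) ((σqs n₀)⁻¹) (n₀⁻¹) 1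
        (N.mul_mem βN apreN) (N.inv_mem (hNmem hn₀N)) (N.inv_mem hn₀N) ?_
      · have e2 : ((σqs c)⁻¹ * σqs m) * (c⁻¹*m) * (σqs n₀)⁻¹ * n₀⁻¹
            = (((σqs c)⁻¹ * σqs m) * (c⁻¹*m)) * (σqs n₀)⁻¹ * n₀⁻¹ * 1 := by group
        rw [e2]; exact h'
      · have e3 : (((σqs c)⁻¹ * σqs m) * (c⁻¹*m)) * n₀⁻¹ * (σqs n₀)⁻¹ * 1
            = ((σqs c)⁻¹ * σqs m) * (c⁻¹*m) * n₀⁻¹ * (σqs n₀)⁻¹ := by group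
        rw [e3]; exact hY0
    have X : ((σqs c)⁻¹ * σqs m) * (σqs n₀)⁻¹ * (c⁻¹*m) * n₀⁻¹ ∈ H := by
      refine hswap ((σqs c)⁻¹ * σqs m) ((σqs n₀)⁻¹) (c⁻¹*m) (n₀⁻¹)
        βN (N.inv_mem (hNmem hn₀N)) apreN ?_
      exact X2
    have eF : σqs (c⁻¹ * m * n₀⁻¹) * (c⁻¹ * m * n₀⁻¹)
        = ((σqs c)⁻¹ * σqs m) * (σqs n₀)⁻¹ * (c⁻¹*m) * n₀⁻¹ := by
      simp only [map_mul, map_inv]; group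
    rw [eF]; exact X
  set Gf : {μ : G ⧸ H → G ⧸ H // IsEquivRealStructure σ' H μ} → H1Reps σqs H := fun μ =>
    ⟨c⁻¹ * (μ.1 ((1:G) : G ⧸ H)).out * n₀⁻¹, Gprop μ⟩ with hGfdef
  -- F ∘ Gf = id  (on the nose)
  have hFG : ∀ μ, F (Gf μ) = μ := by
    intro μ
    apply Subtype.ext
    funext x
    refine QuotientGroup.induction_on x ?_
    intro g
    calc (F (Gf μ)).1 ((g : G) : G ⧸ H)
        = ((c * σqs g * c⁻¹ * (c * (c⁻¹ * (μ.1 ((1:G) : G ⧸ H)).out * n₀⁻¹) * n₀) : G) : G ⧸ H) :=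
          Fmk (Gf μ) g
      _ = ((c * σqs g * c⁻¹ * (μ.1 ((1:G) : G ⧸ H)).out : G) : G ⧸ H) := congrArg _ (by group)
      _ = σ' g • (((μ.1 ((1:G) : G ⧸ H)).out : G) : G ⧸ H) := rfl
      _ = σ' g • (μ.1 ((1:G) : G ⧸ H)) := congrArg (σ' g • ·) (Quotient.out_eq' _)
      _ = μ.1 (g • ((1:G) : G ⧸ H)) := (μ.2.2 g _).symm
      _ = μ.1 ((g : G) : G ⧸ H) := congrArg μ.1 (congrArg _ (mul_one g))
  -- Gf ∘ F relates to id
  have hGF : ∀ a, H1Rel σqs H (Gf (F a)) a := by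
    intro a
    refine ⟨1, N.one_mem, ?_⟩
    have h1 : ((((F a).1 ((1:G) : G ⧸ H)).out : G) : G ⧸ H)
        = ((c * σqs 1 * c⁻¹ * (c*a.1*n₀) : G) : G ⧸ H) :=
      (Quotient.out_eq' _).trans (Fmk a 1)
    rw [QuotientGroup.eq] at h1
    have h1' : ((F a).1 ((1:G) : G ⧸ H)).out⁻¹ * (c*a.1*n₀) ∈ H := by
      have e : ((F a).1 ((1:G) : G ⧸ H)).out⁻¹ * (c*a.1*n₀)
          = (((F a).1 ((1:G) : G ⧸ H)).out⁻¹ * (c * σqs 1 * c⁻¹ * (c*a.1*n₀))) := by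
        rw [map_one]; group
      rw [e]; exact h1
    show (σqs 1)⁻¹ * 1 * (c⁻¹ * ((F a).1 ((1:G) : G ⧸ H)).out * n₀⁻¹)⁻¹ * a.1 ∈ H
    have h2 := hconj hn₀N h1'
    have e : (σqs 1)⁻¹ * 1 * (c⁻¹ * ((F a).1 ((1:G) : G ⧸ H)).out * n₀⁻¹)⁻¹ * a.1
        = n₀ * (((F a).1 ((1:G) : G ⧸ H)).out⁻¹ * (c*a.1*n₀)) * n₀⁻¹ := by
      rw [map_one]; group
    rw [e]; exact h2
  -- respect of relations
  have resp1 : ∀ a a', H1Rel σqs H a a' → realStructureRel σ' H (F a) (F a') := by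
    intro a a' hrel
    obtain ⟨b, hbN, hD⟩ := hrel
    have wdr : ∀ (t : G), t ∈ N → ∀ (x y : G), (QuotientGroup.leftRel H).r x y →
        ((x * t : G) : G ⧸ H) = ((y * t : G) : G ⧸ H) := by
      intro t ht x y hxy
      rw [QuotientGroup.leftRel_apply] at hxy
      apply Quotient.sound'
      rw [QuotientGroup.leftRel_apply]
      have h1 := hconj' ht hxy
      have e : (x*t)⁻¹ * (y*t) = t⁻¹ * (x⁻¹*y) * t := by group
      rw [e]; exact h1
    let ψ : Equiv.Perm (G ⧸ H) :=
      { toFun := fun x => Quotient.liftOn' x (fun g => ((g * σqs b : G) : G ⧸ H))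
          (wdr (σqs b) (hNmem hbN))
        invFun := fun x => Quotient.liftOn' x (fun g => ((g * (σqs b)⁻¹ : G) : G ⧸ H))
          (wdr ((σqs b)⁻¹) (N.inv_mem (hNmem hbN)))
        left_inv := by
          intro x
          refine QuotientGroup.induction_on x ?_
          intro g
          show ((g * σqs b * (σqs b)⁻¹ : G) : G ⧸ H) = ((g : G) : G ⧸ H)
          exact congrArg _ (by group)
        right_inv := by
          intro x
          refine QuotientGroup.induction_on x ?_
          intro g
          show ((g * (σqs b)⁻¹ * σqs b : G) : G ⧸ H) = ((g : G) : G ⧸ H)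
          exact congrArg _ (by group) }
    have hψ : ∀ g : G, ψ ((g : G) : G ⧸ H) = ((g * σqs b : G) : G ⧸ H) := fun g => rfl
    have hψs : ∀ g : G, ψ.symm ((g : G) : G ⧸ H) = ((g * (σqs b)⁻¹ : G) : G ⧸ H) := fun g => rfl
    refine ⟨ψ, ?_, ?_⟩
    · intro g x
      refine QuotientGroup.induction_on x ?_
      intro u
      show ψ (((g * u : G)) : G ⧸ H) = g • ψ ((u : G) : G ⧸ H)
      rw [hψ, hψ]
      show _ = ((g * (u * σqs b) : G) : G ⧸ H)
      exact congrArg _ (by group)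
    · intro x
      refine QuotientGroup.induction_on x ?_
      intro g
      rw [Fmk a' g, hψs g, Fmk a (g * (σqs b)⁻¹), hψ, QuotientGroup.eq]
      -- membership chain
      have haN : a.1 ∈ N := a.2.1
      have ha'N : a'.1 ∈ N := a'.2.1
      have hD0 : a'.1⁻¹ * a.1 * b⁻¹ * σqs b ∈ H := by
        have h1 := H.inv_mem hD
        have e : a'.1⁻¹ * a.1 * b⁻¹ * σqs b = ((σqs b)⁻¹ * b * a.1⁻¹ * a'.1)⁻¹ := by group
        rw [e]; exact h1
      have hD1 : a'.1⁻¹ * b⁻¹ * a.1 * σqs b ∈ H :=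
        hswap a'.1⁻¹ b⁻¹ a.1 (σqs b) (N.inv_mem ha'N) (N.inv_mem hbN) haN hD0
      have hD2 : n₀⁻¹ * (a'.1⁻¹ * b⁻¹ * a.1 * σqs b) * n₀ ∈ H := hconj' hn₀N hD1
      have hD3 : (n₀⁻¹ * a'.1⁻¹ * b⁻¹ * a.1) * n₀ * σqs b * 1 ∈ H := by
        refine hswap (n₀⁻¹ * a'.1⁻¹ * b⁻¹ * a.1) n₀ (σqs b) 1
          (N.mul_mem (N.mul_mem (N.mul_mem (N.inv_mem hn₀N) (N.inv_mem ha'N))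
            (N.inv_mem hbN)) haN) hn₀N (hNmem hbN) ?_
        have e : (n₀⁻¹ * a'.1⁻¹ * b⁻¹ * a.1) * σqs b * n₀ * 1
            = n₀⁻¹ * (a'.1⁻¹ * b⁻¹ * a.1 * σqs b) * n₀ := by group
        rw [e]; exact hD2
      have e : (c * σqs g * c⁻¹ * (c * a'.1 * n₀))⁻¹
            * (c * σqs (g * (σqs b)⁻¹) * c⁻¹ * (c * a.1 * n₀) * σqs b)
          = (n₀⁻¹ * a'.1⁻¹ * b⁻¹ * a.1) * n₀ * σqs b * 1 := by
        simp only [map_mul, map_inv, hσ]; group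
      rw [e]; exact hD3
  have resp2 : ∀ μ μ', realStructureRel σ' H μ μ' → H1Rel σqs H (Gf μ) (Gf μ') := by
    intro μ μ' hrel
    obtain ⟨ψ, hψeq, hψcomp⟩ := hrel
    have hψeq' : ∀ (g : G) (x : G ⧸ H), ψ.symm (g • x) = g • ψ.symm x := by
      intro g x
      apply ψ.injective
      rw [Equiv.apply_symm_apply, hψeq, Equiv.apply_symm_apply]
    set b := (ψ ((1:G) : G ⧸ H)).out with hbdef
    set b' := (ψ.symm ((1:G) : G ⧸ H)).out with hb'def
    have hb : ∀ g : G, ψ ((g : G) : G ⧸ H) = ((g * b : G) : G ⧸ H) := by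
      intro g
      calc ψ ((g : G) : G ⧸ H)
          = ψ (g • ((1:G) : G ⧸ H)) := congrArg ψ (congrArg _ (mul_one g)).symm
        _ = g • ψ ((1:G) : G ⧸ H) := hψeq g _
        _ = g • (((ψ ((1:G) : G ⧸ H)).out : G) : G ⧸ H) := congrArg (g • ·) (Quotient.out_eq' _).symm
        _ = ((g * b : G) : G ⧸ H) := rfl
    have hb' : ∀ g : G, ψ.symm ((g : G) : G ⧸ H) = ((g * b' : G) : G ⧸ H) := by
      intro g
      calc ψ.symm ((g : G) : G ⧸ H)
          = ψ.symm (g • ((1:G) : G ⧸ H)) := congrArg ψ.symm (congrArg _ (mul_one g)).symm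
        _ = g • ψ.symm ((1:G) : G ⧸ H) := hψeq' g _
        _ = g • (((ψ.symm ((1:G) : G ⧸ H)).out : G) : G ⧸ H) :=
            congrArg (g • ·) (Quotient.out_eq' _).symm
        _ = ((g * b' : G) : G ⧸ H) := rfl
    have hbH : ∀ h ∈ H, b⁻¹ * h * b ∈ H := by
      intro h hh
      have e0 : ((h:G) : G ⧸ H) = ((1:G) : G ⧸ H) := by
        rw [QuotientGroup.eq]; simpa using H.inv_mem hh
      have h1 : ((h * b : G) : G ⧸ H) = ((1 * b : G) : G ⧸ H) := by
        rw [← hb, ← hb, e0]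
      rw [QuotientGroup.eq] at h1
      have e : b⁻¹ * h * b = ((h*b)⁻¹ * (1*b))⁻¹ := by group
      rw [e]; exact H.inv_mem h1
    have hb'H : ∀ h ∈ H, b'⁻¹ * h * b' ∈ H := by
      intro h hh
      have e0 : ((h:G) : G ⧸ H) = ((1:G) : G ⧸ H) := by
        rw [QuotientGroup.eq]; simpa using H.inv_mem hh
      have h1 : ((h * b' : G) : G ⧸ H) = ((1 * b' : G) : G ⧸ H) := by
        rw [← hb', ← hb', e0]
      rw [QuotientGroup.eq] at h1
      have e : b'⁻¹ * h * b' = ((h*b')⁻¹ * (1*b'))⁻¹ := by group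
      rw [e]; exact H.inv_mem h1
    have hbb' : b * b' ∈ H := by
      have h1 : ψ.symm (ψ ((1:G) : G ⧸ H)) = ((1:G) : G ⧸ H) := ψ.symm_apply_apply _
      have h2 : ψ.symm (ψ ((1:G) : G ⧸ H)) = ((1 * b * b' : G) : G ⧸ H) := by
        rw [show ψ ((1:G) : G ⧸ H) = (((1 * b : G)) : G ⧸ H) from hb 1, hb' (1*b)]
      have h3 : ((1 * b * b' : G) : G ⧸ H) = ((1:G) : G ⧸ H) := h2.symm.trans h1
      rw [QuotientGroup.eq] at h3
      have e : b * b' = ((1*b*b')⁻¹ * 1)⁻¹ := by group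
      rw [e]; exact H.inv_mem h3
    have hbN : b ∈ N := by
      rw [hNdef, Subgroup.mem_normalizer_iff]
      intro g
      constructor
      · intro hg
        have h1 : b'⁻¹ * g * b' ∈ H := hb'H g hg
        have h2 := H.mul_mem (H.mul_mem hbb' h1) (H.inv_mem hbb')
        have e : b * g * b⁻¹ = (b*b') * (b'⁻¹*g*b') * (b*b')⁻¹ := by group
        rw [e]; exact h2
      · intro hg
        have h1 := hbH _ hg
        have e : g = b⁻¹ * (b*g*b⁻¹) * b := by group
        rw [e]; exact h1
    have hb'N : b' ∈ N := by
      have h2 := N.mul_mem (N.inv_mem hbN) (Subgroup.le_normalizer hbb')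
      have e : b' = b⁻¹ * (b*b') := by group
      rw [e]; exact h2
    -- the basepoints
    set m1 := (μ.1 ((1:G) : G ⧸ H)).out with hm1def
    set m2 := (μ'.1 ((1:G) : G ⧸ H)).out with hm2def
    have hAN : c⁻¹ * m1 ∈ N := by
      have h1 := N.mul_mem (Gprop μ).1 hn₀N
      have e : (c⁻¹ * m1 * n₀⁻¹) * n₀ = c⁻¹ * m1 := by group
      rwa [e] at h1
    have hA'N : c⁻¹ * m2 ∈ N := by
      have h1 := N.mul_mem (Gprop μ').1 hn₀N
      have e : (c⁻¹ * m2 * n₀⁻¹) * n₀ = c⁻¹ * m2 := by group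
      rwa [e] at h1
    have hE : ((m2 : G) : G ⧸ H) = ((c * σqs b' * c⁻¹ * m1 * b : G) : G ⧸ H) := by
      calc ((m2 : G) : G ⧸ H) = μ'.1 ((1:G) : G ⧸ H) := Quotient.out_eq' _
        _ = ψ (μ.1 (ψ.symm ((1:G) : G ⧸ H))) := hψcomp _
        _ = ψ (μ.1 (((1 * b' : G)) : G ⧸ H)) := by rw [hb' 1]
        _ = ψ (μ.1 ((b' : G) : G ⧸ H)) := by rw [one_mul]
        _ = ψ (μ.1 (b' • ((1:G) : G ⧸ H))) :=
            congrArg (fun y => ψ (μ.1 y)) (congrArg _ (mul_one b')).symm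
        _ = ψ (σ' b' • μ.1 ((1:G) : G ⧸ H)) := by rw [μ.2.2]
        _ = ψ (σ' b' • ((m1 : G) : G ⧸ H)) :=
            congrArg (fun y => ψ (σ' b' • y)) (Quotient.out_eq' _).symm
        _ = ψ ((σ' b' * m1 : G) : G ⧸ H) := rfl
        _ = ((σ' b' * m1 * b : G) : G ⧸ H) := hb _
        _ = ((c * σqs b' * c⁻¹ * m1 * b : G) : G ⧸ H) := rfl
    rw [QuotientGroup.eq] at hE
    -- hE : m2⁻¹ * (c * σqs b' * c⁻¹ * m1 * b) ∈ H
    have hsb : σqs b * σqs b' ∈ H := by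
      have h1 := hHmem hbb'
      rwa [map_mul] at h1
    have E2 : b⁻¹ * (c⁻¹*m1)⁻¹ * (σqs b')⁻¹ * (c⁻¹*m2) ∈ H := by
      have h1 := H.inv_mem hE
      have e : b⁻¹ * (c⁻¹*m1)⁻¹ * (σqs b')⁻¹ * (c⁻¹*m2)
          = (m2⁻¹ * (c * σqs b' * c⁻¹ * m1 * b))⁻¹ := by group
      rw [e]; exact h1
    have E4 : b⁻¹ * (c⁻¹*m1)⁻¹ * σqs b * (c⁻¹*m2) ∈ H := by
      have hcs : (b⁻¹ * (c⁻¹*m1)⁻¹) * (σqs b * σqs b') * (b⁻¹ * (c⁻¹*m1)⁻¹)⁻¹ ∈ H :=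
        hconj (N.mul_mem (N.inv_mem hbN) (N.inv_mem hAN)) hsb
      have h1 := H.mul_mem hcs E2
      have e : b⁻¹ * (c⁻¹*m1)⁻¹ * σqs b * (c⁻¹*m2)
          = ((b⁻¹ * (c⁻¹*m1)⁻¹) * (σqs b * σqs b') * (b⁻¹ * (c⁻¹*m1)⁻¹)⁻¹)
            * (b⁻¹ * (c⁻¹*m1)⁻¹ * (σqs b')⁻¹ * (c⁻¹*m2)) := by group
      rw [e]; exact h1
    have E5 : b⁻¹ * σqs b * (c⁻¹*m1)⁻¹ * (c⁻¹*m2) ∈ H :=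
      hswap b⁻¹ (σqs b) ((c⁻¹*m1)⁻¹) (c⁻¹*m2) (N.inv_mem hbN) (hNmem hbN)
        (N.inv_mem hAN) E4
    have S0 : n₀ * (b⁻¹ * σqs b * (c⁻¹*m1)⁻¹ * (c⁻¹*m2)) * n₀⁻¹ ∈ H := hconj hn₀N E5
    have S1 : 1 * b⁻¹ * n₀ * (σqs b * (c⁻¹*m1)⁻¹ * (c⁻¹*m2) * n₀⁻¹) ∈ H := by
      refine hswap 1 b⁻¹ n₀ (σqs b * (c⁻¹*m1)⁻¹ * (c⁻¹*m2) * n₀⁻¹)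
        N.one_mem (N.inv_mem hbN) hn₀N ?_
      have e : 1 * n₀ * b⁻¹ * (σqs b * (c⁻¹*m1)⁻¹ * (c⁻¹*m2) * n₀⁻¹)
          = n₀ * (b⁻¹ * σqs b * (c⁻¹*m1)⁻¹ * (c⁻¹*m2)) * n₀⁻¹ := by group
      rw [e]; exact S0
    have S2 : b⁻¹ * σqs b * n₀ * ((c⁻¹*m1)⁻¹ * (c⁻¹*m2) * n₀⁻¹) ∈ H := by
      refine hswap b⁻¹ (σqs b) n₀ ((c⁻¹*m1)⁻¹ * (c⁻¹*m2) * n₀⁻¹)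
        (N.inv_mem hbN) (hNmem hbN) hn₀N ?_
      have e : b⁻¹ * n₀ * σqs b * ((c⁻¹*m1)⁻¹ * (c⁻¹*m2) * n₀⁻¹)
          = 1 * b⁻¹ * n₀ * (σqs b * (c⁻¹*m1)⁻¹ * (c⁻¹*m2) * n₀⁻¹) := by group
      rw [e]; exact S1
    refine ⟨σqs b, hNmem hbN, ?_⟩
    show (σqs (σqs b))⁻¹ * σqs b * (c⁻¹ * m1 * n₀⁻¹)⁻¹ * (c⁻¹ * m2 * n₀⁻¹) ∈ H
    rw [hσ b]
    have e : b⁻¹ * σqs b * (c⁻¹ * m1 * n₀⁻¹)⁻¹ * (c⁻¹ * m2 * n₀⁻¹)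
        = b⁻¹ * σqs b * n₀ * ((c⁻¹*m1)⁻¹ * (c⁻¹*m2) * n₀⁻¹) := by group
    rw [e]; exact S2
  -- assemble the bijection
  refine ⟨{
    toFun := Quot.lift (fun μ => Quot.mk _ (Gf μ)) (fun μ μ' h => Quot.sound (resp2 μ μ' h))
    invFun := Quot.lift (fun a => Quot.mk _ (F a)) (fun a a' h => Quot.sound (resp1 a a' h))
    left_inv := ?_
    right_inv := ?_ }⟩
  · intro q
    induction q using Quot.ind with
    | _ μ => exact congrArg (Quot.mk (realStructureRel σ' H)) (hFG μ)
  · intro q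
    induction q using Quot.ind with
    | _ a => exact Quot.sound (hGF a)
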